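/- Let f : [0,1] → [0,1] be a strictly monotonically increasing differentiable bijection with differentiable inverse f^{-1}, let X be a random variable on [0,1] with density p_X, and let Y := f(X) with density p_Y. If the independence condition ∫₀¹ log f'(x) p_X(x) dx = ∫₀¹ log f'(x) dx holds, then ∫₀¹ log (f^{-1})'(y) p_Y(y) dy ≥ ∫₀¹ log (f^{-1})'(y) dy, with equality if and only if f' is constant. -/

import Mathlib

open MeasureTheory Set Filter Topology

/-- A strictly increasing function on `Icc 0 1` has nonnegative derivative there. -/
lemma igci_aux_deriv_nonneg {f f' : ℝ → ℝ}
    (hmono : StrictMonoOn f (Icc 0 1))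
    (hderiv : ∀ x ∈ Icc (0:ℝ) 1, HasDerivAt f (f' x) x) :
    ∀ x ∈ Icc (0:ℝ) 1, 0 ≤ f' x := by
  intro x hx
  have hslope := hasDerivAt_iff_tendsto_slope.1 (hderiv x hx)
  rcases lt_or_eq_of_le hx.2 with h1 | h1
  · -- x < 1, approach from the right
    have hle : 𝓝[>] x ≤ 𝓝[≠] x := nhdsWithin_mono _ (fun y hy => ne_of_gt hy)
    have ht : Filter.Tendsto (slope f x) (𝓝[>] x) (nhds (f' x)) := hslope.mono_left hle
    refine ge_of_tendsto ht ?_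
    have hmem : Ioc x 1 ∈ 𝓝[>] x := Ioc_mem_nhdsGT_of_mem ⟨le_refl x, h1⟩
    filter_upwards [hmem] with y hy
    have hyI : y ∈ Icc (0:ℝ) 1 := ⟨le_trans hx.1 hy.1.le, hy.2⟩
    have hfy : f x < f y := hmono hx hyI hy.1
    have : 0 < slope f x y := by
      rw [slope_def_field]
      exact div_pos (by linarith) (by linarith [hy.1])
    linarith
  · -- x = 1, approach from the left
    have hle : 𝓝[<] x ≤ 𝓝[≠] x := nhdsWithin_mono _ (fun y hy => ne_of_lt hy)
    have ht : Filter.Tendsto (slope f x) (𝓝[<] x) (nhds (f' x)) := hslope.mono_left hle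
    refine ge_of_tendsto ht ?_
    have hmem : Ico 0 x ∈ 𝓝[<] x := Ico_mem_nhdsLT_of_mem ⟨by linarith [hx.1, hx.2], le_refl x⟩
    filter_upwards [hmem] with y hy
    have hyI : y ∈ Icc (0:ℝ) 1 := ⟨hy.1, le_trans hy.2.le hx.2⟩
    have hfy : f y < f x := hmono hyI hx hy.2
    have : 0 < slope f x y := by
      rw [slope_def_field]
      exact div_pos_of_neg_of_neg (by linarith) (by linarith [hy.2])
    linarith

/-- **IGCI: independence in one direction implies positive correlation in the other.**
Let `f : [0,1] → [0,1]` be a strictly monotonically increasing differentiable bijection with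
differentiable inverse, `X` a random variable on `[0,1]` with density `p_X`, and `Y := f(X)`
with density `p_Y`. If `∫₀¹ log f'(x) p_X(x) dx = ∫₀¹ log f'(x) dx`, then
`∫₀¹ log (f⁻¹)'(y) p_Y(y) dy ≥ ∫₀¹ log (f⁻¹)'(y) dy`, with equality iff `f'` is constant. -/
theorem igci_reverse_direction_correlation
    (f f' finv finv' pX pY : ℝ → ℝ)
    (hmono : StrictMonoOn f (Icc 0 1))
    (hbij : Set.BijOn f (Icc 0 1) (Icc 0 1))
    (hinv_left : ∀ x ∈ Icc (0:ℝ) 1, finv (f x) = x)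
    (hinv_right : ∀ y ∈ Icc (0:ℝ) 1, f (finv y) = y)
    (hderiv : ∀ x ∈ Icc (0:ℝ) 1, HasDerivAt f (f' x) x)
    (hderivinv : ∀ y ∈ Icc (0:ℝ) 1, HasDerivAt finv (finv' y) y)
    (hpX_nonneg : ∀ x, 0 ≤ pX x)
    (hpX_prob : (∫ x in (0:ℝ)..1, pX x) = 1)
    (hpY : ∀ y ∈ Icc (0:ℝ) 1, pY y = pX (finv y) * finv' y)
    (hint1 : IntervalIntegrable (fun x => Real.log (f' x) * pX x) volume 0 1)
    (hint2 : IntervalIntegrable (fun x => Real.log (f' x)) volume 0 1)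
    (hint3 : IntervalIntegrable (fun y => Real.log (finv' y) * pY y) volume 0 1)
    (hint4 : IntervalIntegrable (fun y => Real.log (finv' y)) volume 0 1)
    (hindep : (∫ x in (0:ℝ)..1, Real.log (f' x) * pX x) = ∫ x in (0:ℝ)..1, Real.log (f' x)) :
    (∫ y in (0:ℝ)..1, Real.log (finv' y) * pY y) ≥ (∫ y in (0:ℝ)..1, Real.log (finv' y)) ∧
      ((∫ y in (0:ℝ)..1, Real.log (finv' y) * pY y) = (∫ y in (0:ℝ)..1, Real.log (finv' y)) ↔
        ∃ c : ℝ, ∀ x ∈ Icc (0:ℝ) 1, f' x = c) := by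
  have hmaps : ∀ x ∈ Icc (0:ℝ) 1, f x ∈ Icc (0:ℝ) 1 := fun x hx => hbij.mapsTo hx
  have hud : UniqueDiffOn ℝ (Icc (0:ℝ) 1) := uniqueDiffOn_Icc one_pos
  have hderivW : ∀ x ∈ Icc (0:ℝ) 1, HasDerivWithinAt f (f' x) (Icc 0 1) x :=
    fun x hx => (hderiv x hx).hasDerivWithinAt
  have himg : f '' Icc 0 1 = Icc (0:ℝ) 1 := hbij.image_eq
  have hinj : Set.InjOn f (Icc 0 1) := hmono.injOn
  -- chain rule : finv' (f x) * f' x = 1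
  have hkey : ∀ x ∈ Icc (0:ℝ) 1, finv' (f x) * f' x = 1 := by
    intro x hx
    have hc : HasDerivAt (finv ∘ f) (finv' (f x) * f' x) x :=
      (hderivinv (f x) (hmaps x hx)).comp x (hderiv x hx)
    have hcw : HasDerivWithinAt (fun y => y) (finv' (f x) * f' x) (Icc 0 1) x :=
      hc.hasDerivWithinAt.congr (fun y hy => (hinv_left y hy).symm) (hinv_left x hx).symm
    have h1 : HasDerivWithinAt (fun y : ℝ => y) 1 (Icc (0:ℝ) 1) x :=
      (hasDerivAt_id x).hasDerivWithinAt
    have := hcw.derivWithin (hud x hx)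
    rw [h1.derivWithin (hud x hx)] at this
    linarith
  have hpos : ∀ x ∈ Icc (0:ℝ) 1, 0 < f' x := by
    intro x hx
    have h0 := igci_aux_deriv_nonneg hmono hderiv x hx
    rcases h0.lt_or_eq with h | h
    · exact h
    · exfalso; have := hkey x hx; rw [← h, mul_zero] at this; norm_num at this
  have hfinv_val : ∀ x ∈ Icc (0:ℝ) 1, finv' (f x) = (f' x)⁻¹ := by
    intro x hx
    exact eq_inv_of_mul_eq_one_left (hkey x hx)
  -- f 0 = 0 and f 1 = 1
  have hf0 : f 0 = 0 := by
    obtain ⟨z, hz, hfz⟩ := hbij.surjOn (show (0:ℝ) ∈ Icc (0:ℝ) 1 by norm_num)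
    have h1 : f 0 ≤ f z := hmono.monotoneOn (by norm_num) hz hz.1
    have h2 := (hmaps 0 (by norm_num)).1
    rw [hfz] at h1
    linarith
  have hf1 : f 1 = 1 := by
    obtain ⟨z, hz, hfz⟩ := hbij.surjOn (show (1:ℝ) ∈ Icc (0:ℝ) 1 by norm_num)
    have h1 : f z ≤ f 1 := hmono.monotoneOn hz (by norm_num) hz.2
    have h2 := (hmaps 1 (by norm_num)).2
    rw [hfz] at h1
    linarith
  -- change of variables for the two integrals in y
  have hCoV := fun g : ℝ → ℝ =>
    MeasureTheory.integral_image_eq_integral_abs_deriv_smul measurableSet_Icc hderivW hinj g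
  have hA : (∫ y in (0:ℝ)..1, Real.log (finv' y) * pY y)
      = -∫ x in (0:ℝ)..1, Real.log (f' x) * pX x := by
    have h1 := hCoV (fun y => Real.log (finv' y) * pY y)
    rw [himg] at h1
    have h2 : ∫ x in Icc (0:ℝ) 1,
        |f' x| • (Real.log (finv' (f x)) * pY (f x))
        = ∫ x in Icc (0:ℝ) 1, -(Real.log (f' x) * pX x) := by
      refine setIntegral_congr_fun measurableSet_Icc (fun x hx => ?_)
      have hp := hpos x hx
      have hk := hfinv_val x hx
      rw [hpY (f x) (hmaps x hx), hinv_left x hx, hk, smul_eq_mul,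
        abs_of_pos hp, Real.log_inv]
      field_simp
    rw [intervalIntegral.integral_of_le (by norm_num : (0:ℝ) ≤ 1),
      intervalIntegral.integral_of_le (by norm_num : (0:ℝ) ≤ 1),
      ← integral_Icc_eq_integral_Ioc, ← integral_Icc_eq_integral_Ioc, h1, h2,
      integral_neg]
  have hB : (∫ y in (0:ℝ)..1, Real.log (finv' y))
      = -∫ x in Icc (0:ℝ) 1, Real.log (f' x) * f' x := by
    have h1 := hCoV (fun y => Real.log (finv' y))
    rw [himg] at h1
    have h2 : ∫ x in Icc (0:ℝ) 1, |f' x| • Real.log (finv' (f x))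
        = ∫ x in Icc (0:ℝ) 1, -(Real.log (f' x) * f' x) := by
      refine setIntegral_congr_fun measurableSet_Icc (fun x hx => ?_)
      have hp := hpos x hx
      rw [hfinv_val x hx, smul_eq_mul, abs_of_pos hp, Real.log_inv]
      ring
    rw [intervalIntegral.integral_of_le (by norm_num : (0:ℝ) ≤ 1),
      ← integral_Icc_eq_integral_Ioc, h1, h2, integral_neg]
  -- integrability of log f' * f' on Icc 0 1
  have hJ4 : IntegrableOn (fun x => Real.log (f' x) * f' x) (Icc 0 1) volume := by
    have h0 : IntegrableOn (fun y => Real.log (finv' y)) (Icc 0 1) volume := by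
      rw [integrableOn_Icc_iff_integrableOn_Ioc]
      exact (intervalIntegrable_iff_integrableOn_Ioc_of_le (by norm_num)).1 hint4
    rw [← himg] at h0
    have h1 := (MeasureTheory.integrableOn_image_iff_integrableOn_abs_deriv_smul
      measurableSet_Icc hderivW hinj (fun y => Real.log (finv' y))).1 h0
    have h2 : IntegrableOn (fun x => -(Real.log (f' x) * f' x)) (Icc 0 1) volume := by
      refine h1.congr_fun (fun x hx => ?_) measurableSet_Icc
      have hp := hpos x hx
      dsimp only
      rw [hfinv_val x hx, smul_eq_mul, abs_of_pos hp, Real.log_inv]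
      ring
    exact integrable_neg_iff.1 h2
  have hJ2 : IntegrableOn (fun x => Real.log (f' x)) (Icc 0 1) volume := by
    rw [integrableOn_Icc_iff_integrableOn_Ioc]
    exact (intervalIntegrable_iff_integrableOn_Ioc_of_le (by norm_num)).1 hint2
  -- the difference is ∫_{Icc} (f' - 1) * log f'
  set D : ℝ := ∫ x in Icc (0:ℝ) 1, (f' x - 1) * Real.log (f' x) with hD
  have hABD : (∫ y in (0:ℝ)..1, Real.log (finv' y) * pY y)
      = (∫ y in (0:ℝ)..1, Real.log (finv' y)) + D := by
    rw [hA, hB, hindep]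
    have hL : (∫ x in (0:ℝ)..1, Real.log (f' x)) = ∫ x in Icc (0:ℝ) 1, Real.log (f' x) := by
      rw [intervalIntegral.integral_of_le (by norm_num : (0:ℝ) ≤ 1),
        ← integral_Icc_eq_integral_Ioc]
    have hcg : ∫ x in Icc (0:ℝ) 1, (f' x - 1) * Real.log (f' x)
        = ∫ x in Icc (0:ℝ) 1, (Real.log (f' x) * f' x - Real.log (f' x)) := by
      refine setIntegral_congr_fun measurableSet_Icc (fun x hx => ?_)
      ring
    have hsplit : (∫ x in Icc (0:ℝ) 1, (Real.log (f' x) * f' x - Real.log (f' x)))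
        = (∫ x in Icc (0:ℝ) 1, Real.log (f' x) * f' x)
          - ∫ x in Icc (0:ℝ) 1, Real.log (f' x) := integral_sub hJ4 hJ2
    rw [hL, hD]
    linarith [hcg, hsplit]
  have hDnonneg : 0 ≤ D := by
    refine setIntegral_nonneg measurableSet_Icc (fun x hx => ?_)
    have hp := hpos x hx
    rcases le_or_gt 1 (f' x) with h | h
    · exact mul_nonneg (by linarith) (Real.log_nonneg h)
    · have := Real.log_nonpos (by linarith) h.le
      nlinarith
  constructor
  · rw [hABD]; linarith
  constructor
  · -- equality → f' constant
    intro heq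
    rw [hABD] at heq
    have hD0 : D = 0 := by linarith
    have hJD : IntegrableOn (fun x => (f' x - 1) * Real.log (f' x)) (Icc 0 1) volume := by
      have hsub : IntegrableOn
          (fun x => Real.log (f' x) * f' x - Real.log (f' x)) (Icc 0 1) volume := hJ4.sub hJ2
      refine hsub.congr_fun (fun x hx => ?_) measurableSet_Icc
      ring
    have hae : (fun x => (f' x - 1) * Real.log (f' x))
        =ᵐ[volume.restrict (Icc (0:ℝ) 1)] 0 := by
      refine (setIntegral_eq_zero_iff_of_nonneg_ae ?_ hJD).1 hD0
      filter_upwards [ae_restrict_mem measurableSet_Icc] with x hx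
      simp only [Pi.zero_apply]
      have hp := hpos x hx
      rcases le_or_gt 1 (f' x) with h | h
      · exact mul_nonneg (by linarith) (Real.log_nonneg h)
      · have := Real.log_nonpos (by linarith) h.le
        nlinarith
    have hae1 : ∀ᵐ x ∂(volume.restrict (Icc (0:ℝ) 1)), f' x = 1 := by
      filter_upwards [hae, ae_restrict_mem measurableSet_Icc] with x hx hmem
      have hp := hpos x hmem
      by_contra hne
      have hl : Real.log (f' x) ≠ 0 := by
        intro h0
        rcases (Real.log_eq_zero).1 h0 with h | h | h <;> [linarith; exact hne h; linarith]
      have hs : f' x - 1 ≠ 0 := fun h0 => hne (by linarith)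
      exact (mul_ne_zero hs hl) (by simpa using hx)
    -- f' integrable and ∫₀ˣ f' = x, so f x = x, whence f' = 1 everywhere
    have hfid : ∀ x ∈ Icc (0:ℝ) 1, f x = x := by
      intro x hx
      have hsub : Ioc (0:ℝ) x ⊆ Icc (0:ℝ) 1 := fun t ht => ⟨ht.1.le, le_trans ht.2 hx.2⟩
      have haex : ∀ᵐ t ∂(volume.restrict (Ioc (0:ℝ) x)), f' t = 1 :=
        ae_restrict_of_ae_restrict_of_subset hsub hae1
      have hintx : IntervalIntegrable f' volume 0 x := by
        rw [intervalIntegrable_iff_integrableOn_Ioc_of_le hx.1]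
        exact (integrable_const (1:ℝ)).congr (haex.mono fun t ht => ht.symm)
      have hftc : ∫ t in (0:ℝ)..x, f' t = f x - f 0 := by
        refine intervalIntegral.integral_eq_sub_of_hasDerivAt (fun t ht => ?_) hintx
        rw [uIcc_of_le hx.1] at ht
        exact hderiv t ⟨ht.1, le_trans ht.2 hx.2⟩
      have hone : ∫ t in (0:ℝ)..x, f' t = x := by
        have : ∫ t in (0:ℝ)..x, f' t = ∫ t in (0:ℝ)..x, (1:ℝ) := by
          refine intervalIntegral.integral_congr_ae ?_
          have := (ae_restrict_iff' measurableSet_Ioc).1 haex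
          filter_upwards [this] with t ht
          intro htmem
          rw [uIoc_of_le hx.1] at htmem
          exact ht htmem
        rw [this]; simp
      rw [hftc, hf0] at hone
      linarith
    refine ⟨1, fun x hx => ?_⟩
    have hcw : HasDerivWithinAt (fun y : ℝ => y) (f' x) (Icc 0 1) x :=
      (hderivW x hx).congr (fun y hy => (hfid y hy).symm) (hfid x hx).symm
    have h1 : HasDerivWithinAt (fun y : ℝ => y) 1 (Icc (0:ℝ) 1) x :=
      (hasDerivAt_id x).hasDerivWithinAt
    have := hcw.derivWithin (hud x hx)
    rw [h1.derivWithin (hud x hx)] at this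
    linarith
  · -- f' constant → equality
    rintro ⟨c, hc⟩
    -- first show c = 1 using f 1 - f 0 = c
    have hgder : ∀ x ∈ Ico (0:ℝ) 1, HasDerivWithinAt (fun t => f t - c * t) 0 (Ici x) x := by
      intro x hx
      have hxI : x ∈ Icc (0:ℝ) 1 := ⟨hx.1, hx.2.le⟩
      have := ((hderiv x hxI).sub ((hasDerivAt_id x).const_mul c))
      rw [hc x hxI, mul_one, sub_self] at this
      exact this.hasDerivWithinAt
    have hgcont : ContinuousOn (fun t => f t - c * t) (Icc 0 1) := by
      intro x hx
      exact ((hderiv x hx).continuousAt.sub (continuousAt_const.mul continuousAt_id)).continuousWithinAt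
    have hconst := constant_of_has_deriv_right_zero hgcont hgder 1 (by norm_num)
    simp only [hf0, hf1, mul_one, mul_zero, sub_zero] at hconst
    have hc1 : c = 1 := by linarith
    have hD0 : D = 0 := by
      rw [hD]
      have : ∫ x in Icc (0:ℝ) 1, (f' x - 1) * Real.log (f' x)
          = ∫ x in Icc (0:ℝ) 1, (0:ℝ) := by
        refine setIntegral_congr_fun measurableSet_Icc (fun x hx => ?_)
        rw [hc x hx, hc1]
        simp
      rw [this, integral_zero]
    rw [hABD, hD0, add_zero]
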